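/- Let G be a (simple, finite) graph and let C be a cycle of length at least 4 in G. If C has a chord (an edge of G joining two non-consecutive vertices of C), then the subgraph of G induced by the vertex set of C contains a triangle or contains two holes which share a common edge. -/

import Mathlib

open SimpleGraph

/-- A hole of a graph: a chordless (induced) cycle of length at least 4. -/
def SimpleGraph.IsHole {V : Type*} (G : SimpleGraph V) {v : V} (c : G.Walk v v) : Prop :=
  c.IsCycle ∧ 4 ≤ c.length ∧
    ∀ x y, x ∈ c.support → y ∈ c.support → G.Adj x y → s(x, y) ∈ c.edges

/-- The set of edge sets of holes of `G`; its cardinality is the number of holes of `G`. -/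
def SimpleGraph.holeEdgeSets {V : Type*} (G : SimpleGraph V) : Set (Set (Sym2 V)) :=
  {E | ∃ (v : V) (c : G.Walk v v), G.IsHole c ∧ E = {e | e ∈ c.edges}}

/-- All holes of `G` are pairwise edge-disjoint: two holes either have the same edge set
or share no edge. -/
def SimpleGraph.HolesEdgeDisjoint {V : Type*} (G : SimpleGraph V) : Prop :=
  ∀ ⦃u v : V⦄ (c₁ : G.Walk u u) (c₂ : G.Walk v v), G.IsHole c₁ → G.IsHole c₂ →
    (∀ e, e ∈ c₁.edges ↔ e ∈ c₂.edges) ∨ (∀ e, e ∈ c₁.edges → e ∉ c₂.edges)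

/-- A maximal clique of `G` (as a vertex set). -/
def SimpleGraph.IsMaxClique {V : Type*} (G : SimpleGraph V) (K : Set V) : Prop :=
  G.IsClique K ∧ ∀ K', G.IsClique K' → K ⊆ K' → K' = K

/-- A non-edge maximal clique: a maximal clique with at least 3 vertices. -/
def SimpleGraph.IsNonEdgeMaxClique {V : Type*} (G : SimpleGraph V) (K : Set V) : Prop :=
  G.IsMaxClique K ∧ 3 ≤ K.ncard

/-- The clique number of `G`. -/
noncomputable def SimpleGraph.cliqueNumber {V : Type*} (G : SimpleGraph V) : ℕ :=
  sSup {n | ∃ s : Finset V, G.IsNClique n s}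

/-- A `K`-avoiding path: a path which is not an edge of the clique `K` and
whose internal vertices all avoid `K`. -/
def SimpleGraph.IsKAvoidingPath {V : Type*} (G : SimpleGraph V) (K : Set V)
    {a b : V} (p : G.Walk a b) : Prop :=
  p.IsPath ∧ ¬(p.length = 1 ∧ a ∈ K ∧ b ∈ K) ∧
    ∀ w ∈ p.support, w = a ∨ w = b ∨ w ∉ K

/-- The competition graph of a digraph given by its arc relation `D`. -/
def competitionGraph {V : Type*} (D : V → V → Prop) : SimpleGraph V where
  Adj x y := x ≠ y ∧ ∃ v, D x v ∧ D y v
  symm := by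
    refine ⟨?_⟩
    rintro x y ⟨hxy, v, hx, hy⟩
    exact ⟨hxy.symm, v, hy, hx⟩
  loopless := by
    refine ⟨?_⟩
    rintro x ⟨hxx, -⟩
    exact hxx rfl

/-- A digraph is acyclic if it has no directed cycle. -/
def DigraphAcyclic {V : Type*} (D : V → V → Prop) : Prop :=
  ∀ x, ¬ Relation.TransGen D x x

/-- `G` together with `k` added isolated vertices. -/
def SimpleGraph.addIsolated {V : Type*} (G : SimpleGraph V) (k : ℕ) :
    SimpleGraph (V ⊕ Fin k) where
  Adj a b := ∃ x y, G.Adj x y ∧ a = Sum.inl x ∧ b = Sum.inl y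
  symm := by
    refine ⟨?_⟩
    rintro a b ⟨x, y, h, rfl, rfl⟩
    exact ⟨y, x, h.symm, rfl, rfl⟩
  loopless := by
    refine ⟨?_⟩
    rintro a ⟨x, y, h, rfl, hxy⟩
    exact h.ne (Sum.inl.inj hxy)

/-- The competition number of `G`: the least `k` such that `G` plus `k` isolated
vertices is the competition graph of an acyclic digraph. -/
noncomputable def competitionNumber {V : Type*} (G : SimpleGraph V) : ℕ :=
  sInf {k | ∃ D : (V ⊕ Fin k) → (V ⊕ Fin k) → Prop,
    DigraphAcyclic D ∧ competitionGraph D = G.addIsolated k}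


section AuxForLemma1
variable {V : Type*} {G : SimpleGraph V}
open SimpleGraph Walk

lemma aux_edge_of_length_one {x y : V} (p : G.Walk x y) (h : p.length = 1) :
    s(x, y) ∈ p.edges := by
  cases p with
  | nil => simp at h
  | cons h' q =>
    have hq : q.length = 0 := by simpa using h
    have := Walk.eq_of_length_eq_zero hq
    subst this
    simp

lemma aux_end_mem_tail {u v : V} (p : G.Walk u v) (h : ¬ p.Nil) : v ∈ p.support.tail := by
  cases p with
  | nil => simp at h
  | cons h' q => simpa using q.end_mem_support

lemma aux_support_rotate_subset [DecidableEq V] {x v : V} (c : G.Walk v v)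
    (hx : x ∈ c.support) : ∀ z ∈ (c.rotate x hx).support, z ∈ c.support := by
  intro z hz
  rw [Walk.support_eq_cons] at hz
  rcases List.mem_cons.mp hz with rfl | hz
  · exact hx
  · exact List.mem_of_mem_tail ((Walk.support_rotate c x hx).mem_iff.mp hz)

lemma aux_mem_support_rotate [DecidableEq V] {x y v : V} (c : G.Walk v v) (hn : ¬ c.Nil)
    (hx : x ∈ c.support) (hy : y ∈ c.support) : y ∈ (c.rotate x hx).support := by
  have hy' : y ∈ c.support.tail := by
    rw [Walk.support_eq_cons] at hy
    rcases List.mem_cons.mp hy with rfl | hy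
    · exact aux_end_mem_tail c hn
    · exact hy
  exact List.mem_of_mem_tail ((Walk.support_rotate c x hx).mem_iff.mpr hy')

lemma aux_length_rotate [DecidableEq V] {x v : V} (c : G.Walk v v) (hx : x ∈ c.support) :
    (c.rotate x hx).length = c.length := by
  rw [Walk.rotate, Walk.length_append, Nat.add_comm, ← Walk.length_append, Walk.take_spec]

lemma aux_cycle_split [DecidableEq V] {x y : V} (c : G.Walk x x) (hc : c.IsCycle)
    (hy : y ∈ c.support) (hyx : y ≠ x) :
    (c.takeUntil y hy).IsPath ∧ (c.dropUntil y hy).IsPath := by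
  cases c with
  | nil => exact absurd rfl hc.ne_nil
  | @cons _ b _ h p =>
    rw [Walk.cons_isCycle_iff] at hc
    obtain ⟨hp, _⟩ := hc
    have hy' : y ∈ p.support := by
      rcases List.mem_cons.mp (by simpa using hy) with rfl | hy'
      · exact absurd rfl hyx
      · exact hy'
    have ht : (Walk.cons h p).takeUntil y hy = Walk.cons h (p.takeUntil y hy') := by
      simp only [Walk.takeUntil]
      rw [dif_neg (fun hh : x = y => hyx hh.symm)]
    have hd : (Walk.cons h p).dropUntil y hy = p.dropUntil y hy' := by
      simp only [Walk.dropUntil]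
      rw [dif_neg (fun hh : x = y => hyx hh.symm)]
    constructor
    · rw [ht]
      refine (hp.takeUntil hy').cons ?_
      have hnodup : p.support.Nodup := hp.support_nodup
      have hspec := p.take_spec hy'
      rw [← hspec, Walk.support_append] at hnodup
      have hxd : x ∈ (p.dropUntil y hy').support.tail := by
        apply aux_end_mem_tail
        intro hnil
        exact hyx (Walk.eq_of_length_eq_zero (Walk.nil_iff_length_eq.mp hnil))
      exact fun hxt => (List.disjoint_of_nodup_append hnodup) hxt hxd
    · rw [hd]; exact hp.dropUntil hy'

lemma aux_triangle_mid {x y : V} (d : G.Walk y x) (hd : d.length = 2) :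
    ∃ m, m ∈ d.support ∧ G.Adj y m ∧ G.Adj m x := by
  cases d with
  | nil => simp at hd
  | cons h1 q =>
    cases q with
    | nil => simp at hd
    | cons h2 r =>
      have hr : r.length = 0 := by simpa using hd
      have := Walk.eq_of_length_eq_zero hr
      subst this
      exact ⟨_, by simp, h1, h2⟩

lemma aux_main (G : SimpleGraph V) (n : ℕ) :
    ∀ {v : V} (c : G.Walk v v), c.length ≤ n → c.IsCycle → 4 ≤ c.length →
    (∃ x y, x ∈ c.support ∧ y ∈ c.support ∧ G.Adj x y ∧ s(x, y) ∉ c.edges) →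
    (∃ x y z, x ∈ c.support ∧ y ∈ c.support ∧ z ∈ c.support ∧
      G.Adj x y ∧ G.Adj y z ∧ G.Adj x z) ∨
    (∃ (u₁ u₂ : V) (c₁ : G.Walk u₁ u₁) (c₂ : G.Walk u₂ u₂),
      G.IsHole c₁ ∧ G.IsHole c₂ ∧
      (∀ w ∈ c₁.support, w ∈ c.support) ∧ (∀ w ∈ c₂.support, w ∈ c.support) ∧
      ¬(∀ e, e ∈ c₁.edges ↔ e ∈ c₂.edges) ∧ (∃ e, e ∈ c₁.edges ∧ e ∈ c₂.edges)) := by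
  classical
  induction n using Nat.strong_induction_on with
  | _ n ih =>
  intro v c hcn hc hlen ⟨x, y, hxs, hys, hadj, hne⟩
  have hyx : y ≠ x := hadj.ne'
  set c' := c.rotate x hxs with hc'def
  have hc' : c'.IsCycle := hc.rotate hxs
  have hys' : y ∈ c'.support := aux_mem_support_rotate c hc.not_nil hxs hys
  have hE : ∀ e, e ∈ c'.edges ↔ e ∈ c.edges := fun e => (Walk.rotate_edges c x hxs).mem_iff
  have hSup : ∀ z ∈ c'.support, z ∈ c.support := aux_support_rotate_subset c hxs
  set t := c'.takeUntil y hys' with htdef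
  set d := c'.dropUntil y hys' with hddef
  obtain ⟨hpt, hpd⟩ := aux_cycle_split c' hc' hys' hyx
  have hspec : t.append d = c' := c'.take_spec hys'
  have hlensum : t.length + d.length = c.length := by
    rw [← Walk.length_append, hspec, hc'def, aux_length_rotate]
  have htE : ∀ e ∈ t.edges, e ∈ c.edges := fun e he =>
    (hE e).mp (Walk.edges_takeUntil_subset c' hys' he)
  have hdE : ∀ e ∈ d.edges, e ∈ c.edges := fun e he =>
    (hE e).mp (Walk.edges_dropUntil_subset c' hys' he)
  have htS : ∀ w ∈ t.support, w ∈ c.support := fun w hw =>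
    hSup w (Walk.support_takeUntil_subset c' hys' hw)
  have hdS : ∀ w ∈ d.support, w ∈ c.support := fun w hw =>
    hSup w (Walk.support_dropUntil_subset c' hys' hw)
  have hdisj : t.edges.Disjoint d.edges := by
    have hnd : c'.edges.Nodup := hc'.isTrail.edges_nodup
    rw [← hspec, Walk.edges_append] at hnd
    exact List.disjoint_of_nodup_append hnd
  have ht2 : 2 ≤ t.length := by
    rcases Nat.lt_or_ge t.length 2 with h | h
    · interval_cases hl : t.length
      · exact absurd (Walk.eq_of_length_eq_zero hl) hadj.ne
      · exact absurd (htE _ (aux_edge_of_length_one t hl)) hne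
    · exact h
  have hd2 : 2 ≤ d.length := by
    rcases Nat.lt_or_ge d.length 2 with h | h
    · interval_cases hl : d.length
      · exact absurd (Walk.eq_of_length_eq_zero hl).symm hadj.ne
      · have := aux_edge_of_length_one d hl
        rw [Sym2.eq_swap] at this
        exact absurd (hdE _ this) hne
    · exact h
  -- the two cycles
  set C1 : G.Walk x x := Walk.cons hadj d with hC1def
  set C2 : G.Walk y y := Walk.cons hadj.symm t with hC2def
  have hC1cyc : C1.IsCycle :=
    (Walk.cons_isCycle_iff d hadj).mpr ⟨hpd, fun hm => hne (hdE _ hm)⟩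
  have hC2cyc : C2.IsCycle := by
    refine (Walk.cons_isCycle_iff t hadj.symm).mpr ⟨hpt, fun hm => ?_⟩
    rw [Sym2.eq_swap] at hm
    exact hne (htE _ hm)
  have hC1len : C1.length = d.length + 1 := by simp [hC1def]
  have hC2len : C2.length = t.length + 1 := by simp [hC2def]
  have hC1S : ∀ w ∈ C1.support, w ∈ c.support := by
    intro w hw
    rcases List.mem_cons.mp (by simpa [hC1def] using hw) with rfl | hw
    · exact hxs
    · exact hdS w hw
  have hC2S : ∀ w ∈ C2.support, w ∈ c.support := by
    intro w hw
    rcases List.mem_cons.mp (by simpa [hC2def] using hw) with rfl | hw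
    · exact hys
    · exact htS w hw
  -- triangle cases
  by_cases hdl : d.length = 2
  · obtain ⟨m, hm, h1, h2⟩ := aux_triangle_mid d hdl
    exact Or.inl ⟨x, y, m, hxs, hys, hdS m hm, hadj, h1, h2.symm⟩
  by_cases htl : t.length = 2
  · obtain ⟨m, hm, h1, h2⟩ := aux_triangle_mid t htl
    exact Or.inl ⟨y, x, m, hys, hxs, htS m hm, hadj.symm, h1, h2.symm⟩
  have hC1len4 : 4 ≤ C1.length := by omega
  have hC2len4 : 4 ≤ C2.length := by omega
  -- chord cases: recurse
  by_cases hch1 : ∃ a b, a ∈ C1.support ∧ b ∈ C1.support ∧ G.Adj a b ∧ s(a, b) ∉ C1.edges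
  · have hlt : C1.length < n := by omega
    rcases ih C1.length hlt C1 le_rfl hC1cyc hC1len4 hch1 with h | ⟨u₁, u₂, d₁, d₂, h₁, h₂, hs₁, hs₂, hiff, he⟩
    · obtain ⟨a, b, cc, ha, hb, hcc, h3⟩ := h
      exact Or.inl ⟨a, b, cc, hC1S a ha, hC1S b hb, hC1S cc hcc, h3⟩
    · exact Or.inr ⟨u₁, u₂, d₁, d₂, h₁, h₂,
        fun w hw => hC1S w (hs₁ w hw), fun w hw => hC1S w (hs₂ w hw), hiff, he⟩
  by_cases hch2 : ∃ a b, a ∈ C2.support ∧ b ∈ C2.support ∧ G.Adj a b ∧ s(a, b) ∉ C2.edges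
  · have hlt : C2.length < n := by omega
    rcases ih C2.length hlt C2 le_rfl hC2cyc hC2len4 hch2 with h | ⟨u₁, u₂, d₁, d₂, h₁, h₂, hs₁, hs₂, hiff, he⟩
    · obtain ⟨a, b, cc, ha, hb, hcc, h3⟩ := h
      exact Or.inl ⟨a, b, cc, hC2S a ha, hC2S b hb, hC2S cc hcc, h3⟩
    · exact Or.inr ⟨u₁, u₂, d₁, d₂, h₁, h₂,
        fun w hw => hC2S w (hs₁ w hw), fun w hw => hC2S w (hs₂ w hw), hiff, he⟩
  -- both chordless: two holes sharing s(x,y)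
  push_neg at hch1 hch2
  refine Or.inr ⟨x, y, C1, C2, ⟨hC1cyc, hC1len4, hch1⟩,
    ⟨hC2cyc, hC2len4, hch2⟩, hC1S, hC2S, ?_, ?_⟩
  · intro hiff
    obtain ⟨e, he⟩ : ∃ e, e ∈ t.edges :=
      List.exists_mem_of_length_pos (by rw [Walk.length_edges]; omega)
    have heC2 : e ∈ C2.edges := by simp [hC2def, Walk.edges_cons, he]
    have heC1 : e ∈ C1.edges := (hiff e).mpr heC2
    rcases List.mem_cons.mp (by simpa [hC1def] using heC1) with rfl | heD
    · exact hne (htE _ he)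
    · exact hdisj he heD
  · refine ⟨s(x, y), by simp [hC1def], by simp [hC2def, Sym2.eq_swap]⟩

end AuxForLemma1

/-- **Lemma 1.** If a cycle `c` of length at least 4 in `G` has a chord,
then the subgraph of `G` induced by the vertices of `c` contains a triangle or
contains two holes sharing a common edge. -/
theorem cycle_with_chord_triangle_or_two_holes_sharing_edge
    {V : Type*} [Fintype V] (G : SimpleGraph V) {v : V} (c : G.Walk v v)
    (hc : c.IsCycle) (hlen : 4 ≤ c.length)
    (hchord : ∃ x y, x ∈ c.support ∧ y ∈ c.support ∧ G.Adj x y ∧ s(x, y) ∉ c.edges) :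
    (∃ x y z, x ∈ c.support ∧ y ∈ c.support ∧ z ∈ c.support ∧
      G.Adj x y ∧ G.Adj y z ∧ G.Adj x z) ∨
    (∃ (u₁ u₂ : V) (c₁ : G.Walk u₁ u₁) (c₂ : G.Walk u₂ u₂),
      G.IsHole c₁ ∧ G.IsHole c₂ ∧
      (∀ w ∈ c₁.support, w ∈ c.support) ∧ (∀ w ∈ c₂.support, w ∈ c.support) ∧
      ¬(∀ e, e ∈ c₁.edges ↔ e ∈ c₂.edges) ∧ (∃ e, e ∈ c₁.edges ∧ e ∈ c₂.edges)) :=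
  aux_main G c.length c le_rfl hc hlen hchord
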